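/- Let H be a complex Hilbert space, U : H → H unitary, P an orthogonal projection, Φ := U*PU − P. Then ker(Φ − 1) = ker(Φ² − 1) ∩ ker P and ker(Φ + 1) = ker(Φ² − 1) ∩ Ran P. Consequently, if ker(Φ − 1) and ker(Φ + 1) are finite-dimensional then ind(Φ) := dim ker(Φ − 1) − dim ker(Φ + 1) equals dim(ker(Φ² − 1) ∩ ker P) − dim(ker(Φ² − 1) ∩ Ran P). -/

import Mathlib

open ContinuousLinearMap
open scoped InnerProductSpace

section Aux
variable {H : Type*} [NormedAddCommGroup H] [InnerProductSpace ℂ H]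

lemma proj_inner_eq (Q : H →L[ℂ] H) (hadj : ∀ x y : H, ⟪Q x, y⟫_ℂ = ⟪x, Q y⟫_ℂ)
    (hidem : ∀ x : H, Q (Q x) = Q x) (x : H) :
    ⟪Q x, x⟫_ℂ = ((‖Q x‖ ^ 2 : ℝ) : ℂ) := by
  have h := hadj (Q x) x
  rw [hidem] at h
  rw [h, inner_self_eq_norm_sq_to_K]
  norm_cast

lemma proj_inner_eq' (Q : H →L[ℂ] H) (hadj : ∀ x y : H, ⟪Q x, y⟫_ℂ = ⟪x, Q y⟫_ℂ)
    (hidem : ∀ x : H, Q (Q x) = Q x) (x : H) :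
    ⟪x, Q x⟫_ℂ = ((‖Q x‖ ^ 2 : ℝ) : ℂ) := by
  rw [← hadj x x, proj_inner_eq Q hadj hidem]

lemma proj_norm_le (Q : H →L[ℂ] H) (hadj : ∀ x y : H, ⟪Q x, y⟫_ℂ = ⟪x, Q y⟫_ℂ)
    (hidem : ∀ x : H, Q (Q x) = Q x) (x : H) : ‖Q x‖ ≤ ‖x‖ := by
  have h := proj_inner_eq Q hadj hidem x
  have h2 := norm_inner_le_norm (𝕜 := ℂ) (Q x) x
  rw [h] at h2
  have h3 : ‖((‖Q x‖ ^ 2 : ℝ) : ℂ)‖ = ‖Q x‖ ^ 2 := by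
    rw [Complex.norm_real, Real.norm_of_nonneg (by positivity)]
  rw [h3] at h2
  nlinarith [norm_nonneg (Q x), norm_nonneg x]

lemma proj_fix (Q : H →L[ℂ] H) (hadj : ∀ x y : H, ⟪Q x, y⟫_ℂ = ⟪x, Q y⟫_ℂ)
    (hidem : ∀ x : H, Q (Q x) = Q x) (x : H) (h : ‖x‖ ≤ ‖Q x‖) : Q x = x := by
  have heq : ‖Q x‖ = ‖x‖ := le_antisymm (proj_norm_le Q hadj hidem x) h
  have h0 : ⟪x - Q x, x - Q x⟫_ℂ = 0 := by
    rw [inner_sub_left, inner_sub_right, inner_sub_right,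
      proj_inner_eq Q hadj hidem, proj_inner_eq' Q hadj hidem,
      inner_self_eq_norm_sq_to_K, inner_self_eq_norm_sq_to_K, heq]
    push_cast
    ring_nf
    simp
  have := inner_self_eq_zero.mp h0
  have := sub_eq_zero.mp this
  exact this.symm

end Aux
theorem stmt_2 {H : Type*} [NormedAddCommGroup H] [InnerProductSpace ℂ H] [CompleteSpace H]
    (U P : H →L[ℂ] H)
    (hU1 : adjoint U * U = 1) (hU2 : U * adjoint U = 1)
    (hPsa : IsSelfAdjoint P) (hPidem : P * P = P)
    (Φ : H →L[ℂ] H) (hΦ : Φ = adjoint U * P * U - P) :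
    LinearMap.ker ((Φ - 1 : H →L[ℂ] H) : H →ₗ[ℂ] H) = LinearMap.ker ((Φ ^ 2 - 1 : H →L[ℂ] H) : H →ₗ[ℂ] H) ⊓ LinearMap.ker (P : H →ₗ[ℂ] H) ∧
    LinearMap.ker ((Φ + 1 : H →L[ℂ] H) : H →ₗ[ℂ] H) = LinearMap.ker ((Φ ^ 2 - 1 : H →L[ℂ] H) : H →ₗ[ℂ] H) ⊓ LinearMap.range (P : H →ₗ[ℂ] H) ∧
    (FiniteDimensional ℂ (LinearMap.ker ((Φ - 1 : H →L[ℂ] H) : H →ₗ[ℂ] H)) →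
      FiniteDimensional ℂ (LinearMap.ker ((Φ + 1 : H →L[ℂ] H) : H →ₗ[ℂ] H)) →
      (Module.finrank ℂ (LinearMap.ker ((Φ - 1 : H →L[ℂ] H) : H →ₗ[ℂ] H)) : ℤ)
          - (Module.finrank ℂ (LinearMap.ker ((Φ + 1 : H →L[ℂ] H) : H →ₗ[ℂ] H)) : ℤ)
        = (Module.finrank ℂ ↥(LinearMap.ker ((Φ ^ 2 - 1 : H →L[ℂ] H) : H →ₗ[ℂ] H) ⊓ LinearMap.ker (P : H →ₗ[ℂ] H)) : ℤ)
          - (Module.finrank ℂ ↥(LinearMap.ker ((Φ ^ 2 - 1 : H →L[ℂ] H) : H →ₗ[ℂ] H) ⊓ LinearMap.range (P : H →ₗ[ℂ] H)) : ℤ)) := by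
  set Q : H →L[ℂ] H := adjoint U * P * U with hQdef
  have hQadjeq : adjoint Q = Q := by
    rw [hQdef]
    simp only [← star_eq_adjoint]
    simp [star_mul, star_star, hPsa.star_eq, mul_assoc]
  have hQidem : Q * Q = Q := by
    rw [hQdef]
    simp only [mul_assoc]
    rw [show U * (adjoint U * (P * U)) = P * U from by rw [← mul_assoc, hU2, one_mul]]
    rw [show P * (P * U) = P * U from by rw [← mul_assoc, hPidem]]
  have hadjQ : ∀ x y : H, ⟪Q x, y⟫_ℂ = ⟪x, Q y⟫_ℂ := by
    intro x y
    conv_lhs => rw [← hQadjeq]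
    exact adjoint_inner_left Q y x
  have hPadj : adjoint P = P := by rw [← star_eq_adjoint]; exact hPsa.star_eq
  have hadjP : ∀ x y : H, ⟪P x, y⟫_ℂ = ⟪x, P y⟫_ℂ := by
    intro x y
    conv_lhs => rw [← hPadj]
    exact adjoint_inner_left P y x
  have hidemQ : ∀ x : H, Q (Q x) = Q x := by
    intro x; rw [← ContinuousLinearMap.mul_apply, hQidem]
  have hidemP : ∀ x : H, P (P x) = P x := by
    intro x; rw [← ContinuousLinearMap.mul_apply, hPidem]
  have hΦx : ∀ x : H, Φ x = Q x - P x := by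
    intro x; rw [hΦ, sub_apply]
  have main1 : ∀ x : H, Φ x = x ↔ (Φ (Φ x) = x ∧ P x = 0) := by
    intro x
    constructor
    · intro h
      have e1 : ⟪Φ x, x⟫_ℂ = ((‖x‖ ^ 2 : ℝ) : ℂ) := by
        rw [h, inner_self_eq_norm_sq_to_K]; norm_cast
      rw [hΦx x, inner_sub_left, proj_inner_eq Q hadjQ hidemQ,
        proj_inner_eq P hadjP hidemP] at e1
      have e2 : ‖Q x‖ ^ 2 - ‖P x‖ ^ 2 = ‖x‖ ^ 2 := by exact_mod_cast e1
      have e3 := proj_norm_le Q hadjQ hidemQ x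
      have e4 : ‖P x‖ = 0 := by nlinarith [norm_nonneg (P x), norm_nonneg (Q x), norm_nonneg x]
      exact ⟨by rw [h, h], norm_eq_zero.mp e4⟩
    · rintro ⟨h2, hPx⟩
      have hΦQ : Φ x = Q x := by rw [hΦx x, hPx, sub_zero]
      have h3 : Q x - P (Q x) = x := by
        rw [hΦQ, hΦx (Q x), hidemQ] at h2; exact h2
      have e1 : ⟪Q x, x⟫_ℂ - ⟪P (Q x), x⟫_ℂ = ((‖x‖ ^ 2 : ℝ) : ℂ) := by
        rw [← inner_sub_left, h3, inner_self_eq_norm_sq_to_K]; norm_cast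
      have e2 : ⟪P (Q x), x⟫_ℂ = 0 := by rw [hadjP, hPx, inner_zero_right]
      rw [e2, sub_zero, proj_inner_eq Q hadjQ hidemQ] at e1
      have e3 : ‖Q x‖ ^ 2 = ‖x‖ ^ 2 := by exact_mod_cast e1
      have e4 : ‖x‖ ≤ ‖Q x‖ := by nlinarith [norm_nonneg (Q x), norm_nonneg x]
      rw [hΦQ, proj_fix Q hadjQ hidemQ x e4]
  have main2 : ∀ x : H, Φ x = -x ↔ (Φ (Φ x) = x ∧ P x = x) := by
    intro x
    constructor
    · intro h
      have e1 : ⟪Φ x, x⟫_ℂ = -((‖x‖ ^ 2 : ℝ) : ℂ) := by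
        rw [h, inner_neg_left, inner_self_eq_norm_sq_to_K]; norm_cast
      rw [hΦx x, inner_sub_left, proj_inner_eq Q hadjQ hidemQ,
        proj_inner_eq P hadjP hidemP] at e1
      have e2 : ‖Q x‖ ^ 2 - ‖P x‖ ^ 2 = -(‖x‖ ^ 2) := by exact_mod_cast e1
      have e3 := proj_norm_le P hadjP hidemP x
      have e4 : ‖x‖ ≤ ‖P x‖ := by nlinarith [norm_nonneg (P x), norm_nonneg (Q x), norm_nonneg x]
      exact ⟨by rw [h, map_neg, h, neg_neg], proj_fix P hadjP hidemP x e4⟩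
    · rintro ⟨h2, hPx⟩
      have hΦQ : Φ x = Q x - x := by rw [hΦx x, hPx]
      have h3 : P (Q x) = 0 := by
        rw [hΦQ, hΦx (Q x - x), map_sub, map_sub, hidemQ, hPx] at h2
        have : Q x - Q x - (P (Q x) - x) = x := h2
        rw [sub_self, zero_sub, neg_sub] at this
        linear_combination (norm := module) -this
      have e0 : ⟪Q x, x⟫_ℂ = 0 := by
        rw [show ⟪Q x, x⟫_ℂ = ⟪P (Q x), x⟫_ℂ from by rw [hadjP (Q x) x, hPx], h3,
          inner_zero_left]
      rw [proj_inner_eq Q hadjQ hidemQ] at e0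
      have e1 : ‖Q x‖ ^ 2 = 0 := by exact_mod_cast e0
      have e2 : Q x = 0 := by
        rw [← norm_eq_zero]; nlinarith [norm_nonneg (Q x)]
      rw [hΦQ, e2, zero_sub]
  have hker1 : LinearMap.ker ((Φ - 1 : H →L[ℂ] H) : H →ₗ[ℂ] H) = LinearMap.ker ((Φ ^ 2 - 1 : H →L[ℂ] H) : H →ₗ[ℂ] H) ⊓ LinearMap.ker (P : H →ₗ[ℂ] H) := by
    ext x
    simp only [LinearMap.mem_ker, Submodule.mem_inf, ContinuousLinearMap.coe_coe,
      sub_apply, one_apply, pow_two, mul_apply, sub_eq_zero]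
    exact main1 x
  have hker2 : LinearMap.ker ((Φ + 1 : H →L[ℂ] H) : H →ₗ[ℂ] H) = LinearMap.ker ((Φ ^ 2 - 1 : H →L[ℂ] H) : H →ₗ[ℂ] H) ⊓ LinearMap.range (P : H →ₗ[ℂ] H) := by
    ext x
    simp only [LinearMap.mem_ker, LinearMap.mem_range, Submodule.mem_inf,
      ContinuousLinearMap.coe_coe, sub_apply, add_apply, ContinuousLinearMap.one_apply, pow_two, ContinuousLinearMap.mul_apply,
      sub_eq_zero, add_eq_zero_iff_eq_neg]
    rw [main2 x]
    constructor
    · rintro ⟨h1, h2⟩; exact ⟨h1, x, h2⟩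
    · rintro ⟨h1, y, hy⟩
      refine ⟨h1, ?_⟩
      rw [← hy, hidemP]
  exact ⟨hker1, hker2, fun _ _ => by rw [hker1, hker2]⟩
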